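/- arXiv:2503.09337 — 2 statements merged into one kernel-verified Lean document; each statement's English description precedes it below -/
import Mathlib

section
/- Let P : V → W be a linear map between finite-dimensional real vector spaces where V = R^{d} with decomposition indexed by a finite index set I, and fix S ⊆ I. Suppose the null space property relative to S holds: for every nonzero v ∈ ker P, ‖v_S‖₁ < ‖v_{S^c}‖₁ (where v_S denotes v restricted to coordinates in S, extended by zero). Then for every x supported on S, x is the unique minimizer of ‖z‖₁ subject to P z = P x. -/
theorem nsp_implies_unique_recovery
    {I : Type*} [Fintype I] [DecidableEq I]
    {W : Type*} [AddCommGroup W] [Module ℝ W]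
    (P : (I → ℝ) →ₗ[ℝ] W) (S : Finset I)
    (hNSP : ∀ v : I → ℝ, P v = 0 → v ≠ 0 →
      ∑ i ∈ S, |v i| < ∑ i ∈ Sᶜ, |v i|) :
    ∀ x : I → ℝ, (∀ i ∉ S, x i = 0) →
      ∀ z : I → ℝ, P z = P x → z ≠ x → ∑ i, |x i| < ∑ i, |z i| := by
  intro x hx z hPz hzx
  set v : I → ℝ := x - z with hv
  have hPv : P v = 0 := by simp [hv, map_sub, hPz]
  have hvne : v ≠ 0 := by
    intro h
    exact hzx (by ext i; have := congrFun h i; simp [hv] at this; linarith)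
  have hnsp := hNSP v hPv hvne
  have h1 : ∀ i ∈ Sᶜ, |v i| = |z i| := by
    intro i hi
    simp only [hv, Pi.sub_apply]
    rw [hx i (Finset.mem_compl.mp hi)]
    simp [abs_sub_comm]
  have h2 : ∑ i ∈ S, |x i| ≤ ∑ i ∈ S, |z i| + ∑ i ∈ S, |v i| := by
    rw [← Finset.sum_add_distrib]
    refine Finset.sum_le_sum fun i _ => ?_
    have : x i = z i + v i := by simp [hv]
    rw [this]; exact abs_add_le _ _
  have hxS : ∑ i, |x i| = ∑ i ∈ S, |x i| := by
    rw [← Finset.sum_add_sum_compl S]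
    have : ∑ i ∈ Sᶜ, |x i| = 0 :=
      Finset.sum_eq_zero fun i hi => by rw [hx i (Finset.mem_compl.mp hi)]; simp
    rw [this, add_zero]
  have hzsum : ∑ i, |z i| = ∑ i ∈ S, |z i| + ∑ i ∈ Sᶜ, |z i| :=
    (Finset.sum_add_sum_compl S _).symm
  have h3 : ∑ i ∈ Sᶜ, |v i| = ∑ i ∈ Sᶜ, |z i| := Finset.sum_congr rfl h1
  rw [hxS, hzsum]
  calc ∑ i ∈ S, |x i| ≤ ∑ i ∈ S, |z i| + ∑ i ∈ S, |v i| := h2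
    _ < ∑ i ∈ S, |z i| + ∑ i ∈ Sᶜ, |v i| := by linarith
    _ = ∑ i ∈ S, |z i| + ∑ i ∈ Sᶜ, |z i| := by rw [h3]
end

section
/- Let P : R^d → W be a linear map and S a subset of coordinate indices. Suppose every vector x supported on S is the unique minimizer of ‖z‖₁ subject to P z = P x. Then P satisfies the null space property relative to S: for every nonzero v ∈ ker P, ‖v_S‖₁ < ‖v_{S^c}‖₁. -/
theorem unique_recovery_implies_nsp
    {d : ℕ} {W : Type*} [AddCommGroup W] [Module ℝ W]
    (P : (Fin d → ℝ) →ₗ[ℝ] W) (S : Finset (Fin d))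
    (hrec : ∀ x : Fin d → ℝ, (∀ i ∉ S, x i = 0) →
      ∀ z : Fin d → ℝ, P z = P x → z ≠ x → ∑ i, |x i| < ∑ i, |z i|) :
    ∀ v : Fin d → ℝ, P v = 0 → v ≠ 0 →
      ∑ i ∈ S, |v i| < ∑ i ∈ Sᶜ, |v i| := by
  intro v hv hv0
  set x : Fin d → ℝ := fun i => if i ∈ S then v i else 0 with hx
  set z : Fin d → ℝ := fun i => if i ∈ S then 0 else -v i with hz
  have hxS : ∀ i ∉ S, x i = 0 := by intro i hi; simp [hx, hi]
  have hPz : P z = P x := by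
    have : z = x - v := by
      funext i; by_cases hi : i ∈ S <;> simp [hz, hx, hi]
    rw [this, map_sub, hv, sub_zero]
  have hne : z ≠ x := by
    intro h
    apply hv0
    funext i
    by_cases hi : i ∈ S
    · have := congrFun h i; simpa [hz, hx, hi] using this.symm
    · have := congrFun h i; simpa [hz, hx, hi, neg_eq_zero] using this
  have key := hrec x hxS z hPz hne
  have hxsum : ∑ i, |x i| = ∑ i ∈ S, |v i| := by
    rw [← Finset.sum_subset (Finset.subset_univ S)]
    · exact Finset.sum_congr rfl fun i hi => by simp [hx, hi]
    · intro i _ hi; simp [hx, hi]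
  have hzsum : ∑ i, |z i| = ∑ i ∈ Sᶜ, |v i| := by
    rw [← Finset.sum_subset (Finset.subset_univ Sᶜ)]
    · exact Finset.sum_congr rfl fun i hi => by
        simp [hz, Finset.mem_compl.mp hi]
    · intro i _ hi; simp [hz, Finset.notMem_compl.mp hi]
  rw [hxsum, hzsum] at key
  exact key
end
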